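/- (Strict convexity inequality used for uniqueness of KL stationary points) Let p_{G*}, p_{g'}, p_{g''} be Poisson mixtures over ℕ with p_{g'} ≠ p_{g''} on the support of p_{G*}, suppose g', g'' are probability mass functions on a finite grid with ∑_y k(y|ϑ_i) p_{G*}(y)/p_{g}(y) = 1 for all i whenever g ∈ {g',g''} (with convergent sums). Then for every a ∈ (0,1), ∑_i (a g'_i + (1−a) g''_i) ∑_y k(y|ϑ_i) p_{G*}(y)/(a p_{g'}(y) + (1−a) p_{g''}(y)) < 1, contradicting the same stationarity for the mixture; hence at most one strictly positive stationary point exists. -/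

import Mathlib

open MeasureTheory
open scoped ENNReal

/-- The Poisson kernel `k(y|θ) = e^{-θ} θ^y / y!`. -/
noncomputable def poissonK (θ : ℝ) (y : ℕ) : ℝ :=
  Real.exp (-θ) * θ ^ y / (Nat.factorial y)

/-- The Poisson mixture mass function of a measure `G` on `(0,∞)`. -/
noncomputable def pmix (G : Measure ℝ) (y : ℕ) : ℝ :=
  (∫⁻ θ, ENNReal.ofReal (poissonK θ y) ∂G).toReal

/-- The discrete Poisson mixture `p_g(y) = ∑_i k(y|ϑ_i) g_i` for a pmf `g` on a grid. -/
noncomputable def pf {d : ℕ} (ϑ : Fin d → ℝ) (g : Fin d → ℝ) (y : ℕ) : ℝ :=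
  ∑ i, poissonK (ϑ i) y * g i

lemma poissonK_pos {θ : ℝ} (hθ : 0 < θ) (y : ℕ) : 0 < poissonK θ y := by
  unfold poissonK
  have : (0:ℝ) < Nat.factorial y := by positivity
  positivity

lemma pf_pos {d : ℕ} (ϑ g : Fin d → ℝ) (hpos : ∀ i, 0 < ϑ i)
    (hg0 : ∀ i, 0 ≤ g i) (hg1 : ∑ i, g i = 1) (y : ℕ) : 0 < pf ϑ g y := by
  have hex : ∃ i, 0 < g i := by
    by_contra h
    push_neg at h
    have : ∑ i, g i ≤ 0 := Finset.sum_nonpos fun i _ => h i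
    linarith
  obtain ⟨i0, hi0⟩ := hex
  refine Finset.sum_pos' (fun i _ => mul_nonneg (poissonK_pos (hpos i) y).le (hg0 i)) ⟨i0, Finset.mem_univ _, ?_⟩
  exact mul_pos (poissonK_pos (hpos i0) y) hi0

lemma conv_le (C A B a : ℝ) (hC : 0 ≤ C) (hA : 0 < A) (hB : 0 < B)
    (ha : 0 < a) (ha1 : a < 1) :
    C / (a*A + (1-a)*B) ≤ a * (C/A) + (1-a) * (C/B) := by
  have h1a : 0 < 1 - a := by linarith
  have hD : 0 < a*A + (1-a)*B := by positivity
  rw [div_le_iff₀ hD]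
  have h := mul_nonneg hC (mul_nonneg (mul_nonneg ha.le h1a.le) (sq_nonneg (A-B)))
  field_simp
  nlinarith [h]

lemma conv_lt (C A B a : ℝ) (hC : 0 < C) (hA : 0 < A) (hB : 0 < B)
    (ha : 0 < a) (ha1 : a < 1) (hAB : A ≠ B) :
    C / (a*A + (1-a)*B) < a * (C/A) + (1-a) * (C/B) := by
  have h1a : 0 < 1 - a := by linarith
  have hD : 0 < a*A + (1-a)*B := by positivity
  have hsq : 0 < (A-B)^2 := by
    have := sub_ne_zero.mpr hAB
    positivity
  rw [div_lt_iff₀ hD]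
  have h := mul_pos hC (mul_pos (mul_pos ha h1a) hsq)
  field_simp
  nlinarith [h, mul_pos (mul_pos ha h1a) hsq]


/-- if `g'` and `g''` are pmfs on a finite grid which both satisfy the
stationarity condition `∑_y k(y|ϑ_i) p_{G*}(y)/p_g(y) = 1` for all `i` (with convergent
sums), and `p_{g'} ≠ p_{g''}` on the support of `p_{G*}`, then for every `a ∈ (0,1)` the
corresponding quantity at the mixture is strictly smaller than `1`. -/
theorem kl_stationary_mixture_lt_one (d : ℕ) (ϑ : Fin d → ℝ)
    (hpos : ∀ i, 0 < ϑ i) (hmono : StrictMono ϑ)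
    (G : Measure ℝ) [IsProbabilityMeasure G] (hG : G (Set.Ioi (0 : ℝ))ᶜ = 0)
    (g' g'' : Fin d → ℝ)
    (hg'0 : ∀ i, 0 ≤ g' i) (hg'1 : ∑ i, g' i = 1)
    (hg''0 : ∀ i, 0 ≤ g'' i) (hg''1 : ∑ i, g'' i = 1)
    (hsum' : ∀ i, Summable (fun y : ℕ => poissonK (ϑ i) y * pmix G y / pf ϑ g' y))
    (hsum'' : ∀ i, Summable (fun y : ℕ => poissonK (ϑ i) y * pmix G y / pf ϑ g'' y))
    (hstat' : ∀ i, ∑' y : ℕ, poissonK (ϑ i) y * pmix G y / pf ϑ g' y = 1)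
    (hstat'' : ∀ i, ∑' y : ℕ, poissonK (ϑ i) y * pmix G y / pf ϑ g'' y = 1)
    (hne : ∃ y : ℕ, 0 < pmix G y ∧ pf ϑ g' y ≠ pf ϑ g'' y) :
    ∀ a : ℝ, 0 < a → a < 1 →
      ∑ i, (a * g' i + (1 - a) * g'' i) *
          ∑' y : ℕ, poissonK (ϑ i) y * pmix G y /
            (a * pf ϑ g' y + (1 - a) * pf ϑ g'' y) < 1 := by
  intro a ha ha1
  have h1a : 0 < 1 - a := by linarith
  have hA : ∀ y, 0 < pf ϑ g' y := pf_pos ϑ g' hpos hg'0 hg'1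
  have hB : ∀ y, 0 < pf ϑ g'' y := pf_pos ϑ g'' hpos hg''0 hg''1
  have hP : ∀ y, 0 ≤ pmix G y := fun y => ENNReal.toReal_nonneg
  obtain ⟨y0, hP0, hAB⟩ := hne
  -- each inner tsum is < 1
  have key : ∀ i, (∑' y : ℕ, poissonK (ϑ i) y * pmix G y /
      (a * pf ϑ g' y + (1 - a) * pf ϑ g'' y)) < 1 := by
    intro i
    have hk : ∀ y, 0 < poissonK (ϑ i) y := poissonK_pos (hpos i)
    set f : ℕ → ℝ := fun y => poissonK (ϑ i) y * pmix G y /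
      (a * pf ϑ g' y + (1 - a) * pf ϑ g'' y) with hf
    set F : ℕ → ℝ := fun y => a * (poissonK (ϑ i) y * pmix G y / pf ϑ g' y)
      + (1 - a) * (poissonK (ϑ i) y * pmix G y / pf ϑ g'' y) with hF
    have hFsum : Summable F := ((hsum' i).mul_left a).add ((hsum'' i).mul_left (1-a))
    have hle : ∀ y, f y ≤ F y := fun y =>
      conv_le _ _ _ a (mul_nonneg (hk y).le (hP y)) (hA y) (hB y) ha ha1
    have hlt : f y0 < F y0 :=
      conv_lt _ _ _ a (mul_pos (hk y0) hP0) (hA y0) (hB y0) ha ha1 hAB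
    have hfnn : ∀ y, 0 ≤ f y := fun y => by
      have := hA y; have := hB y
      have hD : 0 < a * pf ϑ g' y + (1-a) * pf ϑ g'' y := by positivity
      exact div_nonneg (mul_nonneg (hk y).le (hP y)) hD.le
    have hfsum : Summable f := Summable.of_nonneg_of_le hfnn hle hFsum
    have h := Summable.tsum_lt_tsum hle hlt hfsum hFsum
    have hFval : ∑' y, F y = 1 := by
      rw [hF, Summable.tsum_add ((hsum' i).mul_left a) ((hsum'' i).mul_left (1-a)),
        tsum_mul_left, tsum_mul_left, hstat' i, hstat'' i]
      ring
    calc (∑' y, f y) < ∑' y, F y := h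
      _ = 1 := hFval
  -- combine with weights
  set w : Fin d → ℝ := fun i => a * g' i + (1 - a) * g'' i with hw
  have hw0 : ∀ i, 0 ≤ w i := fun i =>
    add_nonneg (mul_nonneg ha.le (hg'0 i)) (mul_nonneg h1a.le (hg''0 i))
  have hwsum : ∑ i, w i = 1 := by
    simp only [hw, Finset.sum_add_distrib, ← Finset.mul_sum, hg'1, hg''1]
    ring
  have hex : ∃ i, 0 < w i := by
    by_contra h
    push_neg at h
    have : ∑ i, w i ≤ 0 := Finset.sum_nonpos fun i _ => h i
    linarith
  obtain ⟨i0, hi0⟩ := hex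
  have hlt : ∑ i, w i * (∑' y : ℕ, poissonK (ϑ i) y * pmix G y /
      (a * pf ϑ g' y + (1 - a) * pf ϑ g'' y)) < ∑ i, w i := by
    refine Finset.sum_lt_sum (fun i _ => ?_) ⟨i0, Finset.mem_univ _, ?_⟩
    · calc w i * _ ≤ w i * 1 := mul_le_mul_of_nonneg_left (key i).le (hw0 i)
        _ = w i := mul_one _
    · calc w i0 * _ < w i0 * 1 := by
            exact mul_lt_mul_of_pos_left (key i0) hi0
        _ = w i0 := mul_one _
  calc ∑ i, w i * _ < ∑ i, w i := hlt
    _ = 1 := hwsum
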